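/- In the setting of Theorem 1, every element x of X = G *_{⟨z_G = z_H⟩} H admits a standard factorization x = r p_1 q_1 ⋯ p_l q_l, where r, q_1,...,q_l ∈ H, each p_i lies in the subsemigroup PX generated by {x_1,...,x_m}, q_i >_H 1 for i ≠ l, q_l ≥_H 1, and no q_i is a positive power of z_H. -/

import Mathlib

/-- `P` is the positive cone of a left ordering of `G`. -/
def IsLeftOrderPositiveCone {G : Type} [Group G] (P : Set G) : Prop :=
  ∃ r : G → G → Prop, IsStrictTotalOrder G r ∧
    (∀ a b c : G, r a b → r (c * a) (c * b)) ∧ P = {g : G | r 1 g}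

/-- `X`, together with `ιG` and `ιH`, is the amalgamated free product
`G *_{⟨zG = zH⟩} H`, characterized by its universal property. -/
structure IsAmalgamatedProduct {G H X : Type} [Group G] [Group H] [Group X]
    (zG : G) (zH : H) (ιG : G →* X) (ιH : H →* X) : Prop where
  eq : ιG zG = ιH zH
  ind : ∀ {K : Type} [Group K] (f : G →* K) (f' : H →* K), f zG = f' zH →
      ∃! φ : X →* K, φ.comp ιG = f ∧ φ.comp ιH = f'

/-- Auxiliary: legality of a list of blocks. -/
def OkL {X H : Type} [Group X] [Group H] [LinearOrder H]
    (PX : Subsemigroup X) (zH : H) : List (X × H) → Prop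
  | [] => True
  | b :: L => b.1 ∈ PX ∧ (∀ N : ℕ, 0 < N → b.2 ≠ zH ^ N) ∧ (L = [] → 1 ≤ b.2) ∧
      (L ≠ [] → 1 < b.2) ∧ OkL PX zH L

/-- Auxiliary: product of a list of blocks. -/
abbrev BlocksP {X H : Type} [Group X] [Group H] (ιH : H →* X) (L : List (X × H)) : X :=
  (L.map fun b => b.1 * ιH b.2).prod

/-- Auxiliary: existence of a list-form standard factorization. -/
abbrev StdP {X H : Type} [Group X] [Group H] [LinearOrder H]
    (PX : Subsemigroup X) (zH : H) (ιH : H →* X) (y : X) : Prop :=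
  ∃ (r : H) (L : List (X × H)), OkL PX zH L ∧ y = ιH r * BlocksP ιH L

theorem standard_factorization_exists
    {G H X : Type} [Group G] [Group H] [Group X]
    [LinearOrder G] [LinearOrder H]
    (hG : ∀ a b c : G, a < b → c * a < c * b)
    (hH : ∀ a b c : H, a < b → c * a < c * b)
    (zG : G) (zH : H) (hzG : zG ≠ 1) (hzH : zH ≠ 1)
    (hcen : ∀ a : G, zG * a = a * zG)
    (m n : ℕ) (g : Fin (m + 1) → G) (h : Fin (n + 1) → H)
    (hgmono : StrictMono g) (hhmono : StrictMono h)
    (hgcone : {a : G | 1 < a} = (Subsemigroup.closure (Set.range g) : Set G))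
    (hhcone : {a : H | 1 < a} = (Subsemigroup.closure (Set.range h) : Set H))
    (hCFG : ∀ i, g i < zG) (hCFH : ∀ j, h j < zH)
    (hINV : ∀ a b : H, a < b → a * zH < b * zH)
    (ιG : G →* X) (ιH : H →* X)
    (ham : IsAmalgamatedProduct zG zH ιG ιH)
    :
    let x : Fin (m + 1) → X := fun i => ιG (g i) * (ιH zH)⁻¹ * ιH (h 0)
    let PX : Subsemigroup X := Subsemigroup.closure (Set.range x)
    ∀ y : X, ∃ (l : ℕ) (r : H) (p : Fin l → X) (q : Fin l → H),
      (∀ i, p i ∈ PX) ∧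
      (∀ i : Fin l, (i : ℕ) + 1 ≠ l → 1 < q i) ∧
      (∀ i : Fin l, (i : ℕ) + 1 = l → 1 ≤ q i) ∧
      (∀ i : Fin l, ∀ N : ℕ, 0 < N → q i ≠ zH ^ N) ∧
      y = ιH r * (List.ofFn fun i => p i * ιH (q i)).prod := by
  intro x PX y
  -- ## Order facts in H
  have hHle : ∀ a b c : H, a ≤ b → c * a ≤ c * b := by
    intro a b c hab
    rcases hab.lt_or_eq with hlt | rfl
    · exact le_of_lt (hH _ _ c hlt)
    · exact le_rfl
  have hRle : ∀ a b : H, a ≤ b → a * zH ≤ b * zH := by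
    intro a b hab
    rcases hab.lt_or_eq with hlt | rfl
    · exact le_of_lt (hINV _ _ hlt)
    · exact le_rfl
  have hRinv : ∀ a b : H, a < b → a * zH⁻¹ < b * zH⁻¹ := by
    intro a b hab
    by_contra hc
    push_neg at hc
    rcases hc.lt_or_eq with hlt | heq
    · have := hINV _ _ hlt
      simp only [inv_mul_cancel_right] at this
      exact absurd hab (not_lt.mpr (le_of_lt this))
    · have : b = a := by
        have := congrArg (· * zH) heq
        simpa using this
      exact absurd hab (by simp [this])
  have posH : ∀ a : H, 1 < a ↔ a ∈ Subsemigroup.closure (Set.range h) :=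
    fun a => Set.ext_iff.mp hhcone a
  have hposh : ∀ j, 1 < h j := fun j =>
    (posH _).mpr (Subsemigroup.subset_closure ⟨j, rfl⟩)
  have hzH1 : (1 : H) < zH := (hposh 0).trans (hCFH 0)
  have powpos : ∀ N : ℕ, 0 < N → (1 : H) < zH ^ N := by
    intro N hN
    induction N with
    | zero => omega
    | succ k ih =>
      rcases Nat.eq_zero_or_pos k with hk | hk
      · subst hk; simpa using hzH1
      · have h1 := ih hk
        have h2 : zH ^ k * 1 < zH ^ k * zH := hH _ _ _ hzH1
        rw [mul_one] at h2
        calc (1:H) < zH ^ k := h1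
          _ < zH ^ k * zH := h2
          _ = zH ^ (k+1) := (pow_succ zH k).symm
  have hRpow : ∀ (k : ℕ) (a b : H), a < b → a * zH ^ k < b * zH ^ k := by
    intro k
    induction k with
    | zero => intro a b hab; simpa using hab
    | succ j ih =>
      intro a b hab
      have := hINV _ _ (ih a b hab)
      calc a * zH ^ (j+1) = a * zH ^ j * zH := by rw [pow_succ, mul_assoc]
        _ < b * zH ^ j * zH := this
        _ = b * zH ^ (j+1) := by rw [pow_succ, mul_assoc]
  have cof : ∀ a : H, ∃ k : ℕ, a < zH ^ k := by
    intro a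
    rcases le_or_gt a 1 with h1 | h1
    · exact ⟨1, lt_of_le_of_lt h1 (by simpa using hzH1)⟩
    · have ha := (posH a).mp h1
      induction ha using Subsemigroup.closure_induction with
      | mem b hb =>
        obtain ⟨j, rfl⟩ := hb
        exact ⟨1, by simpa using hCFH j⟩
      | mul b c hb hc ihb ihc =>
        obtain ⟨j, hj⟩ := ihb ((posH b).mpr hb)
        obtain ⟨k, hk⟩ := ihc ((posH c).mpr hc)
        refine ⟨j + k, ?_⟩
        calc b * c < b * zH ^ k := hH _ _ _ hk
          _ < zH ^ j * zH ^ k := hRpow k _ _ hj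
          _ = zH ^ (j + k) := (pow_add zH j k).symm
  have conj1 : ∀ b : H, 1 < b → 1 < zH * b * zH⁻¹ := by
    intro b hb
    have h1 : zH * 1 < zH * b := hH _ _ _ hb
    rw [mul_one] at h1
    have h2 := hRinv _ _ h1
    rwa [mul_inv_cancel] at h2
  have conj1' : ∀ b : H, 1 < b → 1 < zH⁻¹ * b * zH := by
    intro b hb
    have h1 : zH⁻¹ * 1 < zH⁻¹ * b := hH _ _ _ hb
    rw [mul_one] at h1
    have h2 := hINV _ _ h1
    rwa [inv_mul_cancel] at h2
  have conjpow : ∀ (k : ℕ) (b : H), 1 < b → 1 < zH ^ k * b * (zH ^ k)⁻¹ := by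
    intro k
    induction k with
    | zero => intro b hb; simpa using hb
    | succ j ih =>
      intro b hb
      have e : zH ^ (j+1) * b * (zH ^ (j+1))⁻¹
          = zH * (zH ^ j * b * (zH ^ j)⁻¹) * zH⁻¹ := by
        rw [pow_succ']; group
      rw [e]
      exact conj1 _ (ih b hb)
  have h5 : ∀ u : H, ∃ k : ℕ, 1 < zH ^ k * u := by
    intro u
    obtain ⟨k, hk⟩ := cof u⁻¹
    have h1 : 1 < u * zH ^ k := by
      have := hH _ _ u hk
      simpa using this
    refine ⟨k, ?_⟩
    have h2 := conjpow k _ h1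
    have e : zH ^ k * (u * zH ^ k) * (zH ^ k)⁻¹ = zH ^ k * u := by group
    rwa [e] at h2
  have hminH : ∀ a : H, 1 < a → h 0 ≤ a := by
    intro a ha
    have ha' := (posH a).mp ha
    induction ha' using Subsemigroup.closure_induction with
    | mem b hb =>
      obtain ⟨j, rfl⟩ := hb
      exact hhmono.monotone (Fin.zero_le j)
    | mul b c hb hc ihb ihc =>
      have h1 := ihb ((posH b).mpr hb)
      have hc1 : 1 < c := (posH c).mpr hc
      have h2 : b * 1 < b * c := hH _ _ _ hc1
      rw [mul_one] at h2
      exact le_trans h1 (le_of_lt h2)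
  have hcomm0 : zH * h 0 = h 0 * zH := by
    have hu : 1 < zH⁻¹ * h 0 * zH := conj1' _ (hposh 0)
    have hv : 1 < zH * h 0 * zH⁻¹ := conj1 _ (hposh 0)
    have h1 : h 0 ≤ zH⁻¹ * h 0 * zH := hminH _ hu
    have h2 : h 0 ≤ zH * h 0 * zH⁻¹ := hminH _ hv
    have h3 : zH⁻¹ * h 0 * zH ≤ h 0 := by
      have h4 := hRle _ _ (hHle _ _ zH⁻¹ h2)
      have e : zH⁻¹ * (zH * h 0 * zH⁻¹) * zH = h 0 := by group
      rwa [e] at h4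
    have h6 : zH⁻¹ * h 0 * zH = h 0 := le_antisymm h3 h1
    have e2 : zH * (zH⁻¹ * h 0 * zH) = h 0 * zH := by group
    rw [h6] at e2
    exact e2
  -- ## Order facts in G
  have posG : ∀ a : G, 1 < a ↔ a ∈ Subsemigroup.closure (Set.range g) :=
    fun a => Set.ext_iff.mp hgcone a
  have hbpos : ∀ i, 1 < zG * (g i)⁻¹ := by
    intro i
    have h1 := hG _ _ (g i)⁻¹ (hCFG i)
    rw [inv_mul_cancel] at h1
    rw [hcen]
    exact h1
  -- ## Facts in X
  have hx : ∀ i, x i = ιG (g i) * (ιH zH)⁻¹ * ιH (h 0) := fun i => rfl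
  have hxmem : ∀ i, x i ∈ PX := fun i => Subsemigroup.subset_closure ⟨i, rfl⟩
  have hxg : ∀ i, ιG (g i) = x i * ιH ((h 0)⁻¹ * zH) := by
    intro i
    rw [hx]
    simp [map_mul, map_inv, mul_assoc]
  have hcommX : ∀ i, Commute (ιH zH) (x i) := by
    intro i
    have h1 : x i * ιH zH = ιG (g i) * ιH (h 0) := by
      calc x i * ιH zH
          = ιG (g i) * ((ιH zH)⁻¹ * (ιH (h 0) * ιH zH)) := by rw [hx]; group
        _ = ιG (g i) * ((ιH zH)⁻¹ * (ιH zH * ιH (h 0))) := by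
            rw [← map_mul, ← map_mul, ← hcomm0]
        _ = ιG (g i) * ιH (h 0) := by group
    have h2 : ιH zH * x i = ιG (g i) * ιH (h 0) := by
      rw [hx, ← ham.eq]
      calc ιG zG * (ιG (g i) * (ιG zG)⁻¹ * ιH (h 0))
          = ιG (zG * g i * zG⁻¹) * ιH (h 0) := by
            rw [map_mul, map_mul, map_inv]; group
        _ = ιG (g i) * ιH (h 0) := by rw [hcen, mul_inv_cancel_right]
    exact h2.trans h1.symm
  have hcommP : ∀ p ∈ PX, Commute (ιH zH) p := by
    intro p hp
    have hp' : p ∈ Subsemigroup.closure (Set.range x) := hp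
    clear hp
    induction hp' using Subsemigroup.closure_induction with
    | mem a ha => obtain ⟨i, rfl⟩ := ha; exact hcommX i
    | mul a b _ _ ca cb => exact ca.mul_right cb
  have hcommZ : ∀ p ∈ PX, ∀ t : ℤ, ιH (zH ^ t) * p = p * ιH (zH ^ t) := by
    intro p hp t
    have := ((hcommP p hp).zpow_left t).eq
    simpa [map_zpow] using this
  have hcommNinv : ∀ p ∈ PX, ∀ k : ℕ, ιH ((zH ^ k)⁻¹) * p = p * ιH ((zH ^ k)⁻¹) := by
    intro p hp k
    have := (((hcommP p hp).pow_left k).inv_left).eq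
    simpa [map_pow, map_inv] using this
  have blocks_cons : ∀ (b : X × H) (L : List (X × H)),
      BlocksP ιH (b :: L) = b.1 * ιH b.2 * BlocksP ιH L := by
    intro b L; simp [BlocksP]
  -- ## Core normalization lemma
  have core : ∀ p ∈ PX, ∀ (u : H) (L : List (X × H)), OkL PX zH L →
      StdP PX zH ιH (p * ιH u * BlocksP ιH L) := by
    intro p hp u L hL
    by_cases hzp : ∃ t : ℤ, u = zH ^ t
    · obtain ⟨t, rfl⟩ := hzp
      have hc := hcommZ p hp t
      cases L with
      | nil =>
        refine ⟨zH ^ t, [(p, 1)], ?_, ?_⟩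
        · refine ⟨hp, ?_, fun _ => le_refl 1, fun hc' => absurd rfl hc', trivial⟩
          intro N hN hEq
          exact (ne_of_gt (powpos N hN)) hEq.symm
        · simp only [BlocksP, List.map_nil, List.prod_nil, mul_one, List.map_cons,
            List.prod_cons, map_one]
          exact hc.symm
      | cons b L2 =>
        obtain ⟨hb1, hb2, hb3, hb4, hb5⟩ := hL
        refine ⟨zH ^ t, (p * b.1, b.2) :: L2, ?_, ?_⟩
        · exact ⟨PX.mul_mem hp hb1, hb2, hb3, hb4, hb5⟩
        · rw [blocks_cons, blocks_cons, ← hc]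
          simp [mul_assoc]
    · push_neg at hzp
      obtain ⟨k, hk⟩ := h5 u
      refine ⟨(zH ^ k)⁻¹, (p, zH ^ k * u) :: L, ?_, ?_⟩
      · refine ⟨hp, ?_, fun _ => le_of_lt hk, fun _ => hk, hL⟩
        intro N hN hEq
        apply hzp ((N : ℤ) - (k : ℤ))
        have e : u = (zH ^ k)⁻¹ * zH ^ N := by rw [← hEq]; group
        rw [e]; group
      · rw [blocks_cons]
        have hc := hcommNinv p hp k
        have e : ιH ((zH ^ k)⁻¹) * (p * ιH (zH ^ k * u) * BlocksP ιH L)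
            = p * ιH u * BlocksP ιH L := by
          simp only [← mul_assoc, hc]
          simp [map_mul, map_pow, mul_assoc]
        exact e.symm
  -- ## Std closure lemmas
  have std_one : StdP PX zH ιH 1 := ⟨1, [], trivial, by simp [BlocksP]⟩
  have std_mulH : ∀ (a : H) (w : X), StdP PX zH ιH w → StdP PX zH ιH (ιH a * w) := by
    rintro a w ⟨r, L, hL, rfl⟩
    exact ⟨a * r, L, hL, by rw [map_mul, mul_assoc]⟩
  have std_mulx : ∀ (i) (w : X), StdP PX zH ιH w → StdP PX zH ιH (x i * w) := by
    rintro i w ⟨r, L, hL, rfl⟩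
    have := core (x i) (hxmem i) r L hL
    rwa [mul_assoc] at this
  have std_mulgpos : ∀ a ∈ Subsemigroup.closure (Set.range g),
      ∀ w : X, StdP PX zH ιH w → StdP PX zH ιH (ιG a * w) := by
    intro a ha
    induction ha using Subsemigroup.closure_induction with
    | mem b hb =>
      obtain ⟨i, rfl⟩ := hb
      intro w hw
      rw [hxg i, mul_assoc]
      exact std_mulx i _ (std_mulH _ _ hw)
    | mul b c _ _ ihb ihc =>
      intro w hw
      rw [map_mul, mul_assoc]
      exact ihb _ (ihc _ hw)
  have std_mulxinv : ∀ (i) (w : X), StdP PX zH ιH w → StdP PX zH ιH ((x i)⁻¹ * w) := by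
    intro i w hw
    have hxi : (x i)⁻¹ = ιH ((h 0)⁻¹) * ιG (zG * (g i)⁻¹) := by
      have e : ιH ((h 0)⁻¹) * ιG (zG * (g i)⁻¹) = (x i)⁻¹ := by
        rw [hx, map_inv ιH, map_mul ιG zG, map_inv ιG, ham.eq]
        group
      exact e.symm
    rw [hxi, mul_assoc]
    exact std_mulH _ _ (std_mulgpos _ ((posG _).mp (hbpos i)) _ hw)
  -- ## Generation of X
  have hT : ∀ v : X, v ∈ Subgroup.closure (Set.range ιG ∪ Set.range ιH) := by
    intro v
    set T := Subgroup.closure (Set.range ιG ∪ Set.range ιH) with hTdef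
    have hGT : ∀ a, ιG a ∈ T := fun a => Subgroup.subset_closure (Or.inl ⟨a, rfl⟩)
    have hHT : ∀ a, ιH a ∈ T := fun a => Subgroup.subset_closure (Or.inr ⟨a, rfl⟩)
    let f : G →* T := ιG.codRestrict T hGT
    let f' : H →* T := ιH.codRestrict T hHT
    have hff : f zG = f' zH := Subtype.ext ham.eq
    obtain ⟨φ, ⟨hφ1, hφ2⟩, -⟩ := ham.ind f f' hff
    obtain ⟨ψ, -, hψu⟩ := ham.ind ιG ιH ham.eq
    have e1 : MonoidHom.id X = ψ := by
      apply hψu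
      constructor <;> ext a <;> rfl
    have e2 : T.subtype.comp φ = ψ := by
      apply hψu
      constructor
      · rw [MonoidHom.comp_assoc, hφ1]; ext a; rfl
      · rw [MonoidHom.comp_assoc, hφ2]; ext a; rfl
    have e3 : T.subtype.comp φ = MonoidHom.id X := e2.trans e1.symm
    have e4 : (φ v : X) = v := congrArg (fun ρ => ρ v) e3
    rw [← e4]
    exact (φ v).2
  have hU : ∀ v : X, v ∈ Subgroup.closure (Set.range ιH ∪ Set.range x) := by
    intro v
    have hle : Subgroup.closure (Set.range ιG ∪ Set.range ιH)
        ≤ Subgroup.closure (Set.range ιH ∪ Set.range x) := by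
      rw [Subgroup.closure_le]
      rintro w (⟨a, rfl⟩ | ⟨a, rfl⟩)
      · -- ιG a in the closure
        have hpos : ∀ b ∈ Subsemigroup.closure (Set.range g),
            ιG b ∈ Subgroup.closure (Set.range ιH ∪ Set.range x) := by
          intro b hb
          induction hb using Subsemigroup.closure_induction with
          | mem c hc =>
            obtain ⟨i, rfl⟩ := hc
            rw [hxg i]
            exact mul_mem (Subgroup.subset_closure (Or.inr ⟨i, rfl⟩))
              (Subgroup.subset_closure (Or.inl ⟨_, rfl⟩))
          | mul c d _ _ ihc ihd =>
            rw [map_mul]; exact mul_mem ihc ihd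
        rcases lt_trichotomy a 1 with h1 | h1 | h1
        · have h2 : (1 : G) < a⁻¹ := by
            have := hG _ _ a⁻¹ h1
            rwa [inv_mul_cancel, mul_one] at this
          have h3 := hpos _ ((posG _).mp h2)
          rw [map_inv] at h3
          have h4 := inv_mem h3
          rwa [inv_inv] at h4
        · subst h1; rw [map_one]; exact one_mem _
        · exact hpos _ ((posG _).mp h1)
      · exact Subgroup.subset_closure (Or.inl ⟨a, rfl⟩)
    exact hle (hT v)
  have hM : ∀ v : X, v ∈ Submonoid.closure ((Set.range ιH ∪ Set.range x)
      ∪ (Set.range ιH ∪ Set.range x)⁻¹) := by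
    intro v
    have h1 : v ∈ (Subgroup.closure (Set.range ιH ∪ Set.range x)).toSubmonoid := hU v
    rwa [Subgroup.closure_toSubmonoid] at h1
  -- ## Main induction
  have hmain : ∀ v : X, ∀ w : X, StdP PX zH ιH w → StdP PX zH ιH (v * w) := by
    intro v
    have hv := hM v
    induction hv using Submonoid.closure_induction with
    | mem b hb =>
      rcases hb with (⟨a, rfl⟩ | ⟨i, rfl⟩) | hb
      · exact std_mulH a
      · exact std_mulx i
      · rw [Set.mem_inv] at hb
        rcases hb with ⟨a, ha⟩ | ⟨i, hi⟩
        · have hb' : b = ιH a⁻¹ := by rw [map_inv, ha, inv_inv]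
          rw [hb']
          exact std_mulH a⁻¹
        · have hb' : b = (x i)⁻¹ := by rw [hi, inv_inv]
          rw [hb']
          exact std_mulxinv i
    | one => intro w hw; rwa [one_mul]
    | mul b c _ _ ihb ihc =>
      intro w hw
      rw [mul_assoc]
      exact ihb _ (ihc _ hw)
  have hy : StdP PX zH ιH y := by
    have := hmain y 1 std_one
    rwa [mul_one] at this
  -- ## Conversion to the Fin-indexed form
  have okl_all : ∀ L : List (X × H), OkL PX zH L →
      ∀ b ∈ L, b.1 ∈ PX ∧ (∀ N : ℕ, 0 < N → b.2 ≠ zH ^ N) ∧ 1 ≤ b.2 := by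
    intro L
    induction L with
    | nil => intro _ b hb; cases hb
    | cons c L ih =>
      rintro ⟨h1, h2, h3, h4, h5'⟩ b hb
      rcases List.mem_cons.mp hb with rfl | hb
      · refine ⟨h1, h2, ?_⟩
        cases L with
        | nil => exact h3 rfl
        | cons d L2 => exact le_of_lt (h4 (by simp))
      · exact ih h5' b hb
  have okl_mid : ∀ L : List (X × H), OkL PX zH L →
      ∀ i : Fin L.length, (i : ℕ) + 1 ≠ L.length → 1 < (L.get i).2 := by
    intro L
    induction L with
    | nil => intro _ i; exact i.elim0
    | cons c L ih =>
      rintro ⟨h1, h2, h3, h4, h5'⟩ i hne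
      induction i using Fin.cases with
      | zero =>
        have hLne : L ≠ [] := by
          intro h0
          subst h0
          simp at hne
        exact h4 hLne
      | succ j =>
        have hne' : (j : ℕ) + 1 ≠ L.length := by
          simp only [List.length_cons, Fin.val_succ] at hne
          omega
        exact ih h5' j hne'
  obtain ⟨r, L, hL, hEq⟩ := hy
  refine ⟨L.length, r, fun i => (L.get i).1, fun i => (L.get i).2, ?_, ?_, ?_, ?_, ?_⟩
  · intro i
    exact (okl_all L hL _ (List.get_mem L i)).1
  · intro i hne
    exact okl_mid L hL i hne
  · intro i _
    exact (okl_all L hL _ (List.get_mem L i)).2.2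
  · intro i
    exact (okl_all L hL _ (List.get_mem L i)).2.1
  · have hofn : (List.ofFn fun i => (L.get i).1 * ιH ((L.get i).2))
        = L.map (fun b => b.1 * ιH b.2) := by
      conv_rhs => rw [← List.ofFn_get L]
      rw [List.map_ofFn]
      rfl
    rw [hofn]
    exact hEq
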